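/- arXiv:2409.02014 — 4 statements merged into one kernel-verified Lean document; each statement's English description precedes it below -/
import Mathlib

section
/- Let d ≥ 1, ρ ≥ 1, S > 0, and let Φ, φ ∈ Υ_{ρ,S}. Suppose there exists an open neighborhood V of 0 in ℝ^d such that for all t₁, t₂ ∈ V: φ(t₁ + t₂)·Φ(t₁)·Φ(t₂) = Φ(t₁ + t₂)·φ(t₁)·φ(t₂). Then there exists c ∈ ℝ^d such that φ(z) = Φ(z)·exp(i·cᵀz) for all z ∈ ℂ^d (where cᵀz = ∑_j c_j z_j). In other words, an element of Υ_{ρ,S} satisfying the Kotlarski-type functional equation with Φ on a real neighborhood of 0 equals Φ up to translation. -/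
noncomputable section
open MeasureTheory

/-- first-order partial derivative of `φ : ℂ^d → ℂ` in the coordinate direction `a` -/
def pderiv1 {d : ℕ} (a : Fin d) (φ : (Fin d → ℂ) → ℂ) : (Fin d → ℂ) → ℂ :=
  fun z => fderiv ℂ φ z (Pi.single a 1)

/-- iterated partial derivatives along a list of coordinate directions -/
def pderivList {d : ℕ} : List (Fin d) → ((Fin d → ℂ) → ℂ) → ((Fin d → ℂ) → ℂ)
  | [], φ => φ
  | a :: l, φ => pderiv1 a (pderivList l φ)

/-- the list of directions encoding the multi-index `j` -/
def multiIndexList {d : ℕ} (j : Fin d → ℕ) : List (Fin d) :=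
  (List.finRange d).flatMap fun a => List.replicate (j a) a

/-- `∂^j φ (0)` for a multi-index `j` -/
def pderivMulti {d : ℕ} (j : Fin d → ℕ) (φ : (Fin d → ℂ) → ℂ) : ℂ :=
  pderivList (multiIndexList j) φ 0

/-- total degree `‖j‖₁` of a multi-index -/
def degTot {d : ℕ} (j : Fin d → ℕ) : ℕ := ∑ a, j a

/-- the class `Υ_{ρ,S}` of entire functions `φ : ℂ^d → ℂ` with `φ(0) = 1`, conjugation
symmetry on ℝ^d, and Taylor coefficients at 0 bounded by `S^{‖j‖₁}/‖j‖₁^{‖j‖₁/ρ}`. -/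
def Upsilon (d : ℕ) (ρ S : ℝ) : Set ((Fin d → ℂ) → ℂ) :=
  {φ | AnalyticOnNhd ℂ φ Set.univ ∧ φ 0 = 1 ∧
    (∀ t : Fin d → ℝ,
      (starRingEnd ℂ) (φ fun a => (t a : ℂ)) = φ fun a => (-(t a) : ℂ)) ∧
    ∀ j : Fin d → ℕ, j ≠ 0 →
      ‖pderivMulti j φ‖ / ∏ a, (Nat.factorial (j a) : ℝ) ≤
        S ^ degTot j / ((degTot j : ℝ) ^ ((degTot j : ℝ) / ρ))}

section Aux
open Set Metric Filter Topology


lemma ext_zero {d : ℕ} {r : ℝ} (hr : 0 < r) (g : (Fin d → ℂ) → ℂ)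
    (hg : AnalyticOnNhd ℂ g Set.univ)
    (h : ∀ t : Fin d → ℝ, (∀ i, |t i| < r) → g (fun a => (t a : ℂ)) = 0) :
    ∀ z, g z = 0 := by
  classical
  have key : ∀ s : Finset (Fin d), ∀ z : Fin d → ℂ,
      (∀ i, i ∉ s → ∃ x : ℝ, z i = (x : ℂ) ∧ |x| < r) → g z = 0 := by
    intro s
    induction s using Finset.induction_on with
    | empty =>
      intro z hz
      choose x hx1 hx2 using fun i => hz i (Finset.notMem_empty i)
      have hzx : z = fun a => ((x a : ℝ) : ℂ) := funext fun i => hx1 i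
      rw [hzx]; exact h x hx2
    | @insert a s ha ih =>
      intro z hz
      set h1 : ℂ → ℂ := fun w => g (Function.update z a w) with hh1
      have hmeq : (fun w : ℂ => Function.update z a w)
          = fun w : ℂ => Function.update z a 0 + w • (Pi.single a 1 : Fin d → ℂ) := by
        funext w; funext i
        by_cases hi : i = a
        · subst hi; simp
        · simp [Function.update_of_ne hi, Pi.single_apply, hi]
      have hm : AnalyticOnNhd ℂ (fun w : ℂ => Function.update z a w) Set.univ := by
        rw [hmeq]
        exact analyticOnNhd_const.add
          ((ContinuousLinearMap.smulRight (ContinuousLinearMap.id ℂ ℂ)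
            ((Pi.single a 1 : Fin d → ℂ))).analyticOnNhd Set.univ)
      have h1a : AnalyticOnNhd ℂ h1 Set.univ :=
        hg.comp hm (Set.mapsTo_univ _ _)
      have hvan : ∀ x : ℝ, |x| < r → h1 (x : ℂ) = 0 := by
        intro x hx
        apply ih
        intro i hi
        by_cases hia : i = a
        · subst hia; exact ⟨x, by simp, hx⟩
        · obtain ⟨y, hy1, hy2⟩ := hz i (by simp [hia, hi])
          exact ⟨y, by simpa [Function.update_of_ne hia] using hy1, hy2⟩
      have t1 : Tendsto (fun x : ℝ => (x : ℂ)) (𝓝[≠] 0) (𝓝[≠] 0) := by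
        apply tendsto_nhdsWithin_of_tendsto_nhds_of_eventually_within
        · have := (Complex.continuous_ofReal.tendsto 0).mono_left
            (nhdsWithin_le_nhds (s := {(0 : ℝ)}ᶜ))
          simpa using this
        · filter_upwards [eventually_mem_nhdsWithin] with x hx
          simpa using hx
      have e1 : ∀ᶠ x : ℝ in 𝓝[≠] (0 : ℝ), h1 (x : ℂ) = 0 := by
        have habs : ∀ᶠ x in 𝓝 (0 : ℝ), |x| < r := by
          have := Metric.ball_mem_nhds (0 : ℝ) hr
          filter_upwards [this] with x hx
          simpa [Real.dist_eq] using hx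
        exact (habs.filter_mono nhdsWithin_le_nhds).mono fun x hx => hvan x hx
      have freq : ∃ᶠ w in 𝓝[≠] (0 : ℂ), h1 w = 0 := t1.frequently e1.frequently
      have hzero := h1a.eqOn_zero_of_preconnected_of_frequently_eq_zero
        isPreconnected_univ (Set.mem_univ (0 : ℂ)) freq
      have : g z = h1 (z a) := by rw [hh1]; simp
      rw [this]
      exact hzero (Set.mem_univ _)
  intro z
  exact key Finset.univ z fun i hi => absurd (Finset.mem_univ i) hi

theorem statement7' (d : ℕ) (hd : 1 ≤ d) (ρ S : ℝ) (hρ : 1 ≤ ρ) (hS : 0 < S)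
    (Φ φ : (Fin d → ℂ) → ℂ)
    (hΦa : AnalyticOnNhd ℂ Φ Set.univ) (hΦ0 : Φ 0 = 1)
    (hΦc : ∀ t : Fin d → ℝ,
      (starRingEnd ℂ) (Φ fun a => (t a : ℂ)) = Φ fun a => (-(t a) : ℂ))
    (hφa : AnalyticOnNhd ℂ φ Set.univ) (hφ0 : φ 0 = 1)
    (hφc : ∀ t : Fin d → ℝ,
      (starRingEnd ℂ) (φ fun a => (t a : ℂ)) = φ fun a => (-(t a) : ℂ))
    (V : Set (Fin d → ℝ)) (hV : IsOpen V) (h0 : (0 : Fin d → ℝ) ∈ V)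
    (heq : ∀ t₁ ∈ V, ∀ t₂ ∈ V,
      φ (fun a => ((t₁ a + t₂ a : ℝ) : ℂ)) * Φ (fun a => (t₁ a : ℂ)) *
          Φ (fun a => (t₂ a : ℂ)) =
        Φ (fun a => ((t₁ a + t₂ a : ℝ) : ℂ)) * φ (fun a => (t₁ a : ℂ)) *
          φ (fun a => (t₂ a : ℂ))) :
    ∃ c : Fin d → ℝ, ∀ z : Fin d → ℂ,
      φ z = Φ z * Complex.exp (Complex.I * ∑ j, (c j : ℂ) * z j) := by
  classical
  set ι : (Fin d → ℝ) →L[ℝ] (Fin d → ℂ) :=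
    ContinuousLinearMap.pi (fun i => Complex.ofRealCLM.comp (ContinuousLinearMap.proj i))
    with hιdef
  set F : (Fin d → ℝ) → ℂ := fun t => φ (ι t) with hFdef
  set G : (Fin d → ℝ) → ℂ := fun t => Φ (ι t) with hGdef
  have hFd : ∀ t, DifferentiableAt ℝ F t := fun t =>
    DifferentiableAt.comp t
      (((hφa (ι t) (Set.mem_univ _)).differentiableAt).restrictScalars ℝ)
      ι.differentiableAt
  have hGd : ∀ t, DifferentiableAt ℝ G t := fun t =>
    DifferentiableAt.comp t
      (((hΦa (ι t) (Set.mem_univ _)).differentiableAt).restrictScalars ℝ)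
      ι.differentiableAt
  have hF0 : F 0 = 1 := by show φ (ι 0) = 1; rw [_root_.map_zero, hφ0]
  have hG0 : G 0 = 1 := by show Φ (ι 0) = 1; rw [_root_.map_zero, hΦ0]
  have hFcont : Continuous F := continuous_iff_continuousAt.2 fun t => (hFd t).continuousAt
  have hGcont : Continuous G := continuous_iff_continuousAt.2 fun t => (hGd t).continuousAt
  set U : Set (Fin d → ℝ) := V ∩ (F ⁻¹' {0}ᶜ ∩ G ⁻¹' {0}ᶜ) with hUdef
  have hUopen : IsOpen U :=
    hV.inter ((isOpen_compl_singleton.preimage hFcont).inter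
      (isOpen_compl_singleton.preimage hGcont))
  have h0U : (0 : Fin d → ℝ) ∈ U := by
    refine ⟨h0, ?_, ?_⟩ <;> simp [hF0, hG0]
  obtain ⟨ε, hε, hball⟩ := Metric.isOpen_iff.1 hUopen 0 h0U
  set r : ℝ := ε / 3 with hrdef
  have hr : 0 < r := by positivity
  have hrε : r < ε := by rw [hrdef]; linarith
  have hmem : ∀ t : Fin d → ℝ, ‖t‖ < ε → t ∈ U := fun t ht =>
    hball (mem_ball_zero_iff.2 ht)
  have hVmem : ∀ t : Fin d → ℝ, ‖t‖ < ε → t ∈ V := fun t ht => (hmem t ht).1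
  have hFne : ∀ t : Fin d → ℝ, ‖t‖ < ε → F t ≠ 0 := fun t ht => by
    simpa using (hmem t ht).2.1
  have hGne : ∀ t : Fin d → ℝ, ‖t‖ < ε → G t ≠ 0 := fun t ht => by
    simpa using (hmem t ht).2.2
  set ψ : (Fin d → ℝ) → ℂ := fun t => F t / G t with hψdef
  have hψd : ∀ t : Fin d → ℝ, ‖t‖ < ε → DifferentiableAt ℝ ψ t := fun t ht =>
    by
    have : DifferentiableAt ℝ (fun t => (G t)⁻¹) t := DifferentiableAt.inv (hGd t) (hGne t ht)
    exact ((hFd t).mul this).congr_of_eventuallyEq (Filter.Eventually.of_forall fun s => div_eq_mul_inv _ _)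
  have heq' : ∀ t₁ : Fin d → ℝ, ‖t₁‖ < r → ∀ t₂ : Fin d → ℝ, ‖t₂‖ < r →
      F (t₁ + t₂) * G t₁ * G t₂ = G (t₁ + t₂) * F t₁ * F t₂ := by
    intro t₁ h1 t₂ h2
    exact heq t₁ (hVmem t₁ (h1.trans hrε)) t₂ (hVmem t₂ (h2.trans hrε))
  have hψmul : ∀ t₁ : Fin d → ℝ, ‖t₁‖ < r → ∀ t₂ : Fin d → ℝ, ‖t₂‖ < r →
      ψ (t₁ + t₂) = ψ t₁ * ψ t₂ := by
    intro t₁ h1 t₂ h2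
    have h12 : ‖t₁ + t₂‖ < ε := by
      have := norm_add_le t₁ t₂
      rw [hrdef] at h1 h2
      linarith
    show F (t₁ + t₂) / G (t₁ + t₂) = F t₁ / G t₁ * (F t₂ / G t₂)
    rw [div_mul_div_comm, div_eq_div_iff (hGne _ h12)
      (mul_ne_zero (hGne _ (h1.trans hrε)) (hGne _ (h2.trans hrε)))]
    linear_combination heq' t₁ h1 t₂ h2
  set L := fderiv ℝ ψ 0 with hLdef
  have hψ0d : DifferentiableAt ℝ ψ 0 := hψd 0 (by simpa using hε)
  have hfd : ∀ t : Fin d → ℝ, ‖t‖ < r → fderiv ℝ ψ t = ψ t • L := by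
    intro t ht
    have htε : ‖t‖ < ε := ht.trans hrε
    have hop : (fun s => ψ (t + s)) =ᶠ[𝓝 (0 : Fin d → ℝ)] fun s => ψ t * ψ s := by
      have hpos : (0 : ℝ) < r - ‖t‖ := by linarith
      filter_upwards [Metric.ball_mem_nhds (0 : Fin d → ℝ) hpos] with s hs
      have hs' : ‖s‖ < r := by
        have := mem_ball_zero_iff.1 hs
        have := norm_nonneg t
        linarith
      exact hψmul t ht s hs'
    have h1 : fderiv ℝ (fun s => ψ (t + s)) 0 = fderiv ℝ (fun s => ψ t * ψ s) 0 := hop.fderiv_eq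
    have h2 : fderiv ℝ (fun s => ψ (t + s)) 0 = fderiv ℝ ψ t := by
      have hc : HasFDerivAt (fun s : Fin d → ℝ => t + s)
          (ContinuousLinearMap.id ℝ (Fin d → ℝ)) 0 :=
        (hasFDerivAt_id (0 : Fin d → ℝ)).const_add t
      have h3 := ((hψd (t + 0) (by simpa using htε)).hasFDerivAt.comp 0 hc)
      rw [add_zero, ContinuousLinearMap.comp_id] at h3
      exact h3.fderiv
    have h3 : fderiv ℝ (fun s => ψ t * ψ s) 0 = ψ t • L := by
      rw [fderiv_const_mul hψ0d]
    rw [← h2, h1, h3]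
  set u : (Fin d → ℝ) → ℂ := fun t => ψ t * Complex.exp (-(L t)) with hudef
  have hu0 : ∀ t : Fin d → ℝ, ‖t‖ < r → HasFDerivAt u (0 : (Fin d → ℝ) →L[ℝ] ℂ) t := by
    intro t ht
    have h1 : HasFDerivAt ψ (ψ t • L) t := by
      have := (hψd t (ht.trans hrε)).hasFDerivAt
      rwa [hfd t ht] at this
    have h2 : HasFDerivAt (fun s : Fin d → ℝ => Complex.exp (-(L s)))
        (Complex.exp (-(L t)) • (-L)) t := by
      have hneg : HasFDerivAt (fun s : Fin d → ℝ => -(L s)) (-L) t := L.hasFDerivAt.neg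
      exact hneg.cexp
    have h3 := h1.mul h2
    have h4 : ψ t • (Complex.exp (-(L t)) • -L) + Complex.exp (-(L t)) • (ψ t • L)
        = (0 : (Fin d → ℝ) →L[ℝ] ℂ) := by
      ext v
      simp only [ContinuousLinearMap.add_apply, ContinuousLinearMap.coe_smul',
        Pi.smul_apply, ContinuousLinearMap.neg_apply, smul_eq_mul,
        ContinuousLinearMap.zero_apply]
      ring
    rw [h4] at h3
    exact h3
  have hcon : ∀ t : Fin d → ℝ, ‖t‖ < r → u t = u 0 := by
    intro t ht
    refine (convex_ball (0 : Fin d → ℝ) r).is_const_of_fderivWithin_eq_zero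
      (fun x hx => ((hu0 x (mem_ball_zero_iff.1 hx)).differentiableAt).differentiableWithinAt)
      (fun x hx => ?_) (mem_ball_zero_iff.2 ht) (mem_ball_zero_iff.2 (by simpa using hr))
    exact ((hu0 x (mem_ball_zero_iff.1 hx)).hasFDerivWithinAt).fderivWithin
      (Metric.isOpen_ball.uniqueDiffOn x hx)
  have hu0val : u 0 = 1 := by
    show ψ 0 * Complex.exp (-(L 0)) = 1
    rw [_root_.map_zero, neg_zero, Complex.exp_zero, mul_one]
    show F 0 / G 0 = 1
    rw [hF0, hG0, div_one]
  have hψexp : ∀ t : Fin d → ℝ, ‖t‖ < r → ψ t = Complex.exp (L t) := by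
    intro t ht
    have h := hcon t ht
    rw [hu0val] at h
    have h' : ψ t * Complex.exp (-(L t)) = 1 := h
    rwa [Complex.exp_neg, mul_inv_eq_one₀ (Complex.exp_ne_zero _)] at h'
  have hFG : ∀ t : Fin d → ℝ, ‖t‖ < r → F t = G t * Complex.exp (L t) := by
    intro t ht
    have h : F t / G t = Complex.exp (L t) := hψexp t ht
    rw [div_eq_iff (hGne t (ht.trans hrε))] at h
    rw [h, mul_comm]
  have hconjF : ∀ t : Fin d → ℝ, (starRingEnd ℂ) (F t) = F (-t) := by
    intro t
    have h2 : F (-t) = φ fun a => -((t a : ℝ) : ℂ) := by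
      show φ (ι (-t)) = _
      congr 1
      funext a
      show (((-t) a : ℝ) : ℂ) = -((t a : ℝ) : ℂ)
      rw [Pi.neg_apply, Complex.ofReal_neg]
    rw [h2]
    exact hφc t
  have hconjG : ∀ t : Fin d → ℝ, (starRingEnd ℂ) (G t) = G (-t) := by
    intro t
    have h2 : G (-t) = Φ fun a => -((t a : ℝ) : ℂ) := by
      show Φ (ι (-t)) = _
      congr 1
      funext a
      show (((-t) a : ℝ) : ℂ) = -((t a : ℝ) : ℂ)
      rw [Pi.neg_apply, Complex.ofReal_neg]
    rw [h2]
    exact hΦc t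
  have hexpconj : ∀ t : Fin d → ℝ, ‖t‖ < r →
      Complex.exp ((starRingEnd ℂ) (L t)) = Complex.exp (-(L t)) := by
    intro t ht
    have hnt : ‖-t‖ < r := by simpa using ht
    have e1 : (starRingEnd ℂ) (F t) = G (-t) * Complex.exp ((starRingEnd ℂ) (L t)) := by
      rw [hFG t ht, _root_.map_mul, hconjG t, ← Complex.exp_conj]
    have e2 : (starRingEnd ℂ) (F t) = G (-t) * Complex.exp (-(L t)) := by
      rw [hconjF t, hFG (-t) hnt, _root_.map_neg]
    exact mul_left_cancel₀ (hGne (-t) (hnt.trans hrε)) (e1.symm.trans e2)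
  have hre : ∀ t : Fin d → ℝ, ‖t‖ < r → (L t).re = 0 := by
    intro t ht
    have h := hexpconj t ht
    have h2 : Complex.exp ((starRingEnd ℂ) (L t) + L t) = 1 := by
      rw [Complex.exp_add, h, ← Complex.exp_add, neg_add_cancel, Complex.exp_zero]
    have h3 : (starRingEnd ℂ) (L t) + L t = ((2 * (L t).re : ℝ) : ℂ) := by
      rw [add_comm]
      exact Complex.add_conj (L t)
    rw [h3, ← Complex.ofReal_exp] at h2
    have h4 : Real.exp (2 * (L t).re) = 1 := by exact_mod_cast h2
    have h5 := (Real.exp_eq_one_iff _).1 h4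
    linarith
  set c : Fin d → ℝ := fun j => (L (Pi.single j 1)).im with hcdef
  have hlam : ∀ j, L (Pi.single j 1) = Complex.I * (c j : ℂ) := by
    intro j
    have htnorm : ‖(r / 2) • (Pi.single j 1 : Fin d → ℝ)‖ < r := by
      rw [pi_norm_lt_iff hr]
      intro i
      rw [Pi.smul_apply]
      by_cases hij : i = j
      · subst hij
        rw [Pi.single_eq_same]
        simp only [smul_eq_mul, mul_one, Real.norm_eq_abs]
        rw [abs_of_pos (by positivity)]
        linarith
      · rw [Pi.single_eq_of_ne hij]
        simpa using hr
    have h0 := hre _ htnorm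
    rw [_root_.map_smul] at h0
    have hre0 : (L (Pi.single j 1)).re = 0 := by
      rw [Complex.smul_re, smul_eq_mul] at h0
      have hr2 : r / 2 ≠ 0 := by positivity
      exact (mul_eq_zero.1 h0).resolve_left hr2
    apply Complex.ext
    · simp [Complex.mul_re, hre0]
    · simp [Complex.mul_im, hcdef]
  have hLt : ∀ t : Fin d → ℝ, Complex.I * ∑ j, (c j : ℂ) * ((t j : ℝ) : ℂ) = L t := by
    intro t
    have hts : t = ∑ j, t j • (Pi.single j 1 : Fin d → ℝ) := by
      ext i
      simp [Pi.single_apply]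
    calc Complex.I * ∑ j, (c j : ℂ) * ((t j : ℝ) : ℂ)
        = ∑ j, (t j : ℂ) * (Complex.I * (c j : ℂ)) := by
          rw [Finset.mul_sum]
          exact Finset.sum_congr rfl fun j _ => by ring
      _ = ∑ j, t j • L (Pi.single j 1) := by
          refine Finset.sum_congr rfl fun j _ => ?_
          rw [hlam j, Complex.real_smul]
      _ = L t := by
          conv_rhs => rw [hts]
          rw [_root_.map_sum]
          exact Finset.sum_congr rfl fun j _ => by rw [_root_.map_smul]
  refine ⟨c, ?_⟩
  have hinner : AnalyticOnNhd ℂ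
      (fun z : Fin d → ℂ => Complex.I * ∑ j, (c j : ℂ) * z j) Set.univ := by
    apply AnalyticOnNhd.mul analyticOnNhd_const
    rw [show (fun x : Fin d → ℂ => ∑ j, (c j : ℂ) * x j) = ∑ j, fun x : Fin d → ℂ => (c j : ℂ) * x j from by ext x; simp [Finset.sum_apply]]
    apply Finset.analyticOnNhd_sum
    intro j _
    exact analyticOnNhd_const.mul
      ((ContinuousLinearMap.proj j : (Fin d → ℂ) →L[ℂ] ℂ).analyticOnNhd _)
  set f : (Fin d → ℂ) → ℂ :=
    fun z => φ z - Φ z * Complex.exp (Complex.I * ∑ j, (c j : ℂ) * z j) with hfdef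
  have hfa : AnalyticOnNhd ℂ f Set.univ := hφa.sub (hΦa.mul hinner.cexp)
  have hfz : ∀ t : Fin d → ℝ, (∀ i, |t i| < r) → f (fun a => (t a : ℂ)) = 0 := by
    intro t hti
    have htn : ‖t‖ < r := by
      rw [pi_norm_lt_iff hr]
      intro i
      simpa [Real.norm_eq_abs] using hti i
    have hfe : f (fun a => (t a : ℂ))
        = F t - G t * Complex.exp (Complex.I * ∑ j, (c j : ℂ) * ((t j : ℝ) : ℂ)) := rfl
    rw [hfe, hLt t, hFG t htn, sub_self]
  intro z
  have hz := ext_zero hr f hfa hfz z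
  exact sub_eq_zero.1 hz

end Aux

/-- uniqueness up to translation in `Υ_{ρ,S}` for the Kotlarski-type
functional equation on a real neighborhood of 0. -/
theorem statement7 (d : ℕ) (hd : 1 ≤ d) (ρ S : ℝ) (hρ : 1 ≤ ρ) (hS : 0 < S)
    (Φ φ : (Fin d → ℂ) → ℂ) (hΦ : Φ ∈ Upsilon d ρ S) (hφ : φ ∈ Upsilon d ρ S)
    (V : Set (Fin d → ℝ)) (hV : IsOpen V) (h0 : (0 : Fin d → ℝ) ∈ V)
    (heq : ∀ t₁ ∈ V, ∀ t₂ ∈ V,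
      φ (fun a => ((t₁ a + t₂ a : ℝ) : ℂ)) * Φ (fun a => (t₁ a : ℂ)) *
          Φ (fun a => (t₂ a : ℂ)) =
        Φ (fun a => ((t₁ a + t₂ a : ℝ) : ℂ)) * φ (fun a => (t₁ a : ℂ)) *
          φ (fun a => (t₂ a : ℂ))) :
    ∃ c : Fin d → ℝ, ∀ z : Fin d → ℂ,
      φ z = Φ z * Complex.exp (Complex.I * ∑ j, (c j : ℂ) * z j) := by
  classical
  obtain ⟨hφa, hφ0, hφc, -⟩ := hφ
  obtain ⟨hΦa, hΦ0, hΦc, -⟩ := hΦ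
  exact statement7' d hd ρ S hρ hS Φ φ hΦa hΦ0 hΦc hφa hφ0 hφc V hV h0 heq
end
end

section
/- Let d ≥ 1 and let X be an ℝ^d-valued random variable. Suppose there exist a, b > 0 and ρ ∈ (0,1) such that E[exp(λᵀX)] ≤ a·exp(b·‖λ‖^ρ) for all λ ∈ ℝ^d, where ‖·‖ is the Euclidean norm. Then X = 0 almost surely. -/
noncomputable section
open MeasureTheory Filter Real


lemma aux_tendsto (b ρ ε : ℝ) (hρ0 : 0 < ρ) (hρ1 : ρ < 1) (hε : 0 < ε) :
    Tendsto (fun t : ℝ => b * t ^ ρ - t * ε) atTop atBot := by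
  have h1 : Tendsto (fun t : ℝ => t ^ ρ * (ε * t ^ (1 - ρ) - b)) atTop atTop := by
    apply Tendsto.atTop_mul_atTop₀ (tendsto_rpow_atTop hρ0)
    apply tendsto_atTop_add_const_right
    exact (tendsto_rpow_atTop (by linarith)).const_mul_atTop hε
  have h2 : Tendsto (fun t : ℝ => t * ε - b * t ^ ρ) atTop atTop := by
    apply h1.congr'
    filter_upwards [eventually_gt_atTop (0:ℝ)] with t ht
    have : t ^ ρ * t ^ (1 - ρ) = t := by
      rw [← Real.rpow_add ht]; simp
    ring_nf
    rw [mul_comm (t ^ ρ) (t ^ (1-ρ))] at this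
    nlinarith [this]
  have := tendsto_neg_atTop_atBot.comp h2
  exact this.congr (fun t => by simp [Function.comp, neg_sub])

lemma aux_nonpos {Ω : Type*} [MeasurableSpace Ω] (P : Measure Ω) [IsProbabilityMeasure P]
    (Y : Ω → ℝ) (hY : Measurable Y) (a b ρ : ℝ) (ha : 0 < a) (hb : 0 < b)
    (hρ0 : 0 < ρ) (hρ1 : ρ < 1)
    (h : ∀ t : ℝ, 0 ≤ t →
      ∫⁻ ω, ENNReal.ofReal (Real.exp (t * Y ω)) ∂P ≤ ENNReal.ofReal (a * Real.exp (b * t ^ ρ))) :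
    ∀ᵐ ω ∂P, Y ω ≤ 0 := by
  have key : ∀ ε : ℝ, 0 < ε → P {ω | ε ≤ Y ω} = 0 := by
    intro ε hε
    have bound : ∀ t : ℝ, 0 ≤ t →
        P {ω | ε ≤ Y ω} ≤ ENNReal.ofReal (a * Real.exp (b * t ^ ρ - t * ε)) := by
      intro t ht
      have hsub : {ω | ε ≤ Y ω} ⊆
          {ω | ENNReal.ofReal (Real.exp (t * ε)) ≤ ENNReal.ofReal (Real.exp (t * Y ω))} := by
        intro ω hω
        exact ENNReal.ofReal_le_ofReal (Real.exp_le_exp.2 (mul_le_mul_of_nonneg_left hω ht))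
      have hmarkov := mul_meas_ge_le_lintegral₀
        (μ := P) (f := fun ω => ENNReal.ofReal (Real.exp (t * Y ω)))
        (ENNReal.measurable_ofReal.comp (Real.measurable_exp.comp (hY.const_mul t))).aemeasurable
        (ENNReal.ofReal (Real.exp (t * ε)))
      have h1 : ENNReal.ofReal (Real.exp (t * ε)) * P {ω | ε ≤ Y ω}
          ≤ ENNReal.ofReal (a * Real.exp (b * t ^ ρ)) :=
        le_trans (mul_le_mul_right (measure_mono hsub) _) (le_trans hmarkov (h t ht))
      have hepos : (0:ℝ) < Real.exp (t * ε) := Real.exp_pos _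
      have h2 : P {ω | ε ≤ Y ω} ≤ ENNReal.ofReal (a * Real.exp (b * t ^ ρ)) /
          ENNReal.ofReal (Real.exp (t * ε)) := by
        rw [ENNReal.le_div_iff_mul_le (Or.inl (by positivity)) (Or.inl ENNReal.ofReal_ne_top)]
        rwa [mul_comm]
      calc P {ω | ε ≤ Y ω} ≤ _ := h2
        _ = ENNReal.ofReal (a * Real.exp (b * t ^ ρ - t * ε)) := by
          rw [← ENNReal.ofReal_div_of_pos hepos]
          congr 1
          rw [mul_div_assoc, ← Real.exp_sub]
    have htend : Tendsto (fun t : ℝ => ENNReal.ofReal (a * Real.exp (b * t ^ ρ - t * ε)))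
        atTop (nhds 0) := by
      have hexp : Tendsto (fun t : ℝ => a * Real.exp (b * t ^ ρ - t * ε)) atTop (nhds 0) := by
        simpa using (Real.tendsto_exp_atBot.comp (aux_tendsto b ρ ε hρ0 hρ1 hε)).const_mul a
      simpa using (ENNReal.tendsto_ofReal hexp)
    have := ge_of_tendsto htend (eventually_atTop.2 ⟨0, fun t ht => bound t ht⟩)
    exact le_antisymm this zero_le
  have hset : {ω | ¬ Y ω ≤ 0} ⊆ ⋃ n : ℕ, {ω | (1 : ℝ)/(n+1) ≤ Y ω} := by
    intro ω hω
    simp only [Set.mem_setOf_eq, not_le] at hω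
    obtain ⟨n, hn⟩ := exists_nat_one_div_lt hω
    exact Set.mem_iUnion.2 ⟨n, le_of_lt hn⟩
  rw [ae_iff]
  refine le_antisymm (le_trans (measure_mono hset) ?_) zero_le
  refine le_trans (measure_iUnion_le _) ?_
  have : ∀ n : ℕ, P {ω | (1:ℝ)/(n+1) ≤ Y ω} = 0 := fun n => key _ (by positivity)
  simp [this]
  exact fun i => key _ (by positivity)

/-- if the Laplace transform of an ℝ^d-valued random variable `X` satisfies
`E[exp(λᵀX)] ≤ a·exp(b·‖λ‖^ρ)` for all `λ`, with `0 < ρ < 1`, then `X = 0` a.s. -/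
theorem statement9 (d : ℕ) (hd : 1 ≤ d)
    {Ω : Type*} [MeasurableSpace Ω] (P : Measure Ω) [IsProbabilityMeasure P]
    (X : Ω → EuclideanSpace ℝ (Fin d)) (hX : Measurable X)
    (a b ρ : ℝ) (ha : 0 < a) (hb : 0 < b) (hρ0 : 0 < ρ) (hρ1 : ρ < 1)
    (hlap : ∀ l : EuclideanSpace ℝ (Fin d),
      ∫⁻ ω, ENNReal.ofReal (Real.exp (∑ i, l i * X ω i)) ∂P
        ≤ ENNReal.ofReal (a * Real.exp (b * ‖l‖ ^ ρ))) :
    ∀ᵐ ω ∂P, X ω = 0 := by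
  have hXi : ∀ i : Fin d, Measurable (fun ω => X ω i) := fun i =>
    (EuclideanSpace.proj (𝕜 := ℝ) i).continuous.measurable.comp hX
  have hkey : ∀ (i : Fin d) (s : ℝ), s = 1 ∨ s = -1 → ∀ᵐ ω ∂P, s * X ω i ≤ 0 := by
    intro i s hs
    apply aux_nonpos P _ ((hXi i).const_mul s) a b ρ ha hb hρ0 hρ1
    intro t ht
    have := hlap (EuclideanSpace.single i (s * t))
    have hsum : ∀ ω, ∑ j, (EuclideanSpace.single i (s * t) : EuclideanSpace ℝ (Fin d)) j * X ω j
        = t * (s * X ω i) := by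
      intro ω
      rw [Finset.sum_eq_single i]
      · simp [EuclideanSpace.single_apply]; ring
      · intro j _ hj; simp [EuclideanSpace.single_apply, hj]
      · simp
    have hnorm : ‖(EuclideanSpace.single i (s * t) : EuclideanSpace ℝ (Fin d))‖ = t := by
      rw [EuclideanSpace.norm_single]
      rcases hs with h | h <;> simp [h, abs_of_nonneg ht, Real.norm_eq_abs]
    simp only [hsum, hnorm] at this
    exact this
  have h1 := fun i => hkey i 1 (Or.inl rfl)
  have h2 := fun i => hkey i (-1) (Or.inr rfl)
  have hall : ∀ᵐ ω ∂P, ∀ i : Fin d, X ω i = 0 := by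
    rw [ae_all_iff]
    intro i
    filter_upwards [h1 i, h2 i] with ω hp hn
    simp only [one_mul] at hp
    simp only [neg_one_mul, neg_nonpos] at hn
    linarith
  filter_upwards [hall] with ω hω
  ext i
  exact hω i
end
end

section
/- Let d ≥ 1 and let X be an ℝ^d-valued random variable. Suppose there exist a, b > 0 such that E[exp(λᵀX)] ≤ a·exp(b·‖λ‖) for all λ ∈ ℝ^d, where ‖·‖ is the Euclidean norm. Then ‖X‖ ≤ b almost surely; in particular X is almost surely bounded. -/
noncomputable section
open MeasureTheory Filter

/-- Chernoff argument: if `∫ exp(n f) ≤ a exp(n c)` for all `n : ℕ`, then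
`P {f ≥ c + ε} = 0` for every `ε > 0`. -/
theorem aux_null {Ω : Type*} [MeasurableSpace Ω] (P : Measure Ω) [IsProbabilityMeasure P]
    (f : Ω → ℝ) (hf : Measurable f) (a c : ℝ) (ha : 0 < a)
    (hbound : ∀ n : ℕ, ∫⁻ ω, ENNReal.ofReal (Real.exp ((n : ℝ) * f ω)) ∂P
        ≤ ENNReal.ofReal (a * Real.exp ((n : ℝ) * c)))
    (ε : ℝ) (hε : 0 < ε) :
    P {ω | c + ε ≤ f ω} = 0 := by
  have key : ∀ n : ℕ, P {ω | c + ε ≤ f ω} ≤ ENNReal.ofReal (a * Real.exp (-(n : ℝ) * ε)) := by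
    intro n
    have hmeas : AEMeasurable (fun ω => ENNReal.ofReal (Real.exp ((n : ℝ) * f ω))) P :=
      (ENNReal.measurable_ofReal.comp (Real.measurable_exp.comp
        (measurable_const.mul hf))).aemeasurable
    have hsub : {ω | c + ε ≤ f ω} ⊆
        {ω | ENNReal.ofReal (Real.exp ((n : ℝ) * (c + ε)))
          ≤ ENNReal.ofReal (Real.exp ((n : ℝ) * f ω))} := by
      intro ω hω
      have hn0 : (0 : ℝ) ≤ (n : ℝ) := Nat.cast_nonneg n
      exact ENNReal.ofReal_le_ofReal (Real.exp_le_exp.2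
        (mul_le_mul_of_nonneg_left hω hn0))
    have hmarkov := mul_meas_ge_le_lintegral₀ hmeas
      (ENNReal.ofReal (Real.exp ((n : ℝ) * (c + ε))))
    have h1 : ENNReal.ofReal (Real.exp ((n : ℝ) * (c + ε))) * P {ω | c + ε ≤ f ω}
        ≤ ENNReal.ofReal (a * Real.exp ((n : ℝ) * c)) :=
      le_trans (mul_le_mul_right (measure_mono hsub) _) (le_trans hmarkov (hbound n))
    have heq : ENNReal.ofReal (a * Real.exp ((n : ℝ) * c)) =
        ENNReal.ofReal (Real.exp ((n : ℝ) * (c + ε)))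
          * ENNReal.ofReal (a * Real.exp (-(n : ℝ) * ε)) := by
      rw [← ENNReal.ofReal_mul (Real.exp_nonneg _)]
      congr 1
      have : Real.exp ((n : ℝ) * (c + ε)) * Real.exp (-(n : ℝ) * ε)
          = Real.exp ((n : ℝ) * c) := by
        rw [← Real.exp_add]; congr 1; ring
      calc a * Real.exp ((n : ℝ) * c)
          = a * (Real.exp ((n : ℝ) * (c + ε)) * Real.exp (-(n : ℝ) * ε)) := by rw [this]
        _ = Real.exp ((n : ℝ) * (c + ε)) * (a * Real.exp (-(n : ℝ) * ε)) := by ring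
    rw [heq] at h1
    exact (ENNReal.mul_le_mul_iff_right (by positivity) ENNReal.ofReal_ne_top).1 h1
  have hlim : Tendsto (fun n : ℕ => ENNReal.ofReal (a * Real.exp (-(n : ℝ) * ε)))
      atTop (nhds 0) := by
    have h1 : Tendsto (fun n : ℕ => -(n : ℝ) * ε) atTop atBot := by
      have : Tendsto (fun n : ℕ => (n : ℝ) * ε) atTop atTop :=
        Tendsto.atTop_mul_const hε tendsto_natCast_atTop_atTop
      have h' := tendsto_neg_atTop_atBot.comp this
      have heq : (fun n : ℕ => -(n : ℝ) * ε) = (Neg.neg ∘ fun n : ℕ => (n : ℝ) * ε) := by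
        funext n; simp [Function.comp, neg_mul]
      rw [heq]; exact h'
    have h2 : Tendsto (fun n : ℕ => a * Real.exp (-(n : ℝ) * ε)) atTop (nhds 0) := by
      have := (Real.tendsto_exp_atBot.comp h1).const_mul a
      simpa using this
    have := ENNReal.tendsto_ofReal h2
    simpa using this
  exact le_antisymm (ge_of_tendsto hlim (Eventually.of_forall key)) zero_le

/-- if `E[exp(λᵀX)] ≤ a·exp(b·‖λ‖)` for all `λ ∈ ℝ^d`, then `‖X‖ ≤ b` a.s.
(case ρ = 1 of the Chernoff-bound characterization of Assumption (H2)). -/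
theorem statement10 (d : ℕ) (hd : 1 ≤ d)
    {Ω : Type*} [MeasurableSpace Ω] (P : Measure Ω) [IsProbabilityMeasure P]
    (X : Ω → EuclideanSpace ℝ (Fin d)) (hX : Measurable X)
    (a b : ℝ) (ha : 0 < a) (hb : 0 < b)
    (hlap : ∀ l : EuclideanSpace ℝ (Fin d),
      ∫⁻ ω, ENNReal.ofReal (Real.exp (∑ i, l i * X ω i)) ∂P
        ≤ ENNReal.ofReal (a * Real.exp (b * ‖l‖))) :
    ∀ᵐ ω ∂P, ‖X ω‖ ≤ b := by
  have hsum : ∀ (l : EuclideanSpace ℝ (Fin d)) (ω : Ω),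
      (∑ i, l i * X ω i) = @inner ℝ _ _ l (X ω) := by
    intro l ω
    simp [PiLp.inner_apply, RCLike.inner_apply, conj_trivial]
    exact Finset.sum_congr rfl fun i _ => mul_comm _ _
  -- for each l, a.s. ⟪l, X⟫ ≤ b ‖l‖
  have hae_l : ∀ l : EuclideanSpace ℝ (Fin d),
      ∀ᵐ ω ∂P, @inner ℝ _ _ l (X ω) ≤ b * ‖l‖ := by
    intro l
    have hfl : Measurable fun ω => @inner ℝ _ _ l (X ω) :=
      (Continuous.inner continuous_const continuous_id).measurable.comp hX
    have hbound : ∀ n : ℕ, ∫⁻ ω, ENNReal.ofReal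
        (Real.exp ((n : ℝ) * @inner ℝ _ _ l (X ω))) ∂P
        ≤ ENNReal.ofReal (a * Real.exp ((n : ℝ) * (b * ‖l‖))) := by
      intro n
      have h := hlap ((n : ℝ) • l)
      have he1 : ∀ ω, (∑ i, ((n : ℝ) • l) i * X ω i)
          = (n : ℝ) * @inner ℝ _ _ l (X ω) := by
        intro ω
        rw [hsum ((n : ℝ) • l) ω, real_inner_smul_left]
      have he2 : b * ‖(n : ℝ) • l‖ = (n : ℝ) * (b * ‖l‖) := by
        rw [norm_smul]
        simp [abs_of_nonneg (Nat.cast_nonneg n : (0:ℝ) ≤ n)]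
        ring
      simp only [he1, he2] at h
      exact h
    have hnull : ∀ ε > (0 : ℝ),
        P {ω | b * ‖l‖ + ε ≤ @inner ℝ _ _ l (X ω)} = 0 :=
      fun ε hε => aux_null P _ hfl a (b * ‖l‖) ha hbound ε hε
    rw [ae_iff]
    refine measure_mono_null ?_
      (measure_iUnion_null fun n : ℕ => hnull (1 / ((n : ℝ) + 1)) (by positivity))
    intro ω hω
    simp only [Set.mem_setOf_eq, not_le] at hω
    obtain ⟨n, hn⟩ := exists_nat_one_div_lt (sub_pos.2 hω)
    exact Set.mem_iUnion.2 ⟨n, by simp only [Set.mem_setOf_eq]; linarith⟩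
  obtain ⟨s, hsc, hsd⟩ := TopologicalSpace.exists_countable_dense (EuclideanSpace ℝ (Fin d))
  have hae : ∀ᵐ ω ∂P, ∀ l ∈ s, @inner ℝ _ _ l (X ω) ≤ b * ‖l‖ :=
    (ae_ball_iff hsc).2 fun l _ => hae_l l
  filter_upwards [hae] with ω hω
  have hC : IsClosed {l : EuclideanSpace ℝ (Fin d) | @inner ℝ _ _ l (X ω) ≤ b * ‖l‖} :=
    isClosed_le (Continuous.inner continuous_id continuous_const)
      (continuous_const.mul continuous_norm)
  have hall : ∀ l : EuclideanSpace ℝ (Fin d), @inner ℝ _ _ l (X ω) ≤ b * ‖l‖ := by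
    have hsub : s ⊆ {l : EuclideanSpace ℝ (Fin d) | @inner ℝ _ _ l (X ω) ≤ b * ‖l‖} :=
      fun l hl => hω l hl
    have h2 := closure_minimal hsub hC
    exact fun l => h2 (hsd l)
  have hx := hall (X ω)
  rw [real_inner_self_eq_norm_sq] at hx
  nlinarith [norm_nonneg (X ω)]
end
end

section
/- Let d ≥ 1, ν_est > 0, and let (Y_ℓ)_{ℓ ≥ 1} = ((Y_ℓ⁽¹⁾, Y_ℓ⁽²⁾))_{ℓ ≥ 1} be i.i.d. random variables with values in ℝ^d × ℝ^d, with joint characteristic function Φ(t₁,t₂) = E[exp(i·t₁ᵀY₁⁽¹⁾ + i·t₂ᵀY₁⁽²⁾)]. Let φ : ℝ^d → ℂ be measurable and bounded on [−2ν_est, 2ν_est]^d. Define the empirical characteristic function φ̃_n(t₁,t₂) = n^{−1}∑_{ℓ=1}^n exp(i·t₁ᵀY_ℓ⁽¹⁾ + i·t₂ᵀY_ℓ⁽²⁾) and M_n(φ) = ∫_{[−ν_est,ν_est]^d × [−ν_est,ν_est]^d} |φ(t₁+t₂)·φ̃_n(t₁,0)·φ̃_n(0,t₂) − φ̃_n(t₁,t₂)·φ(t₁)·φ(t₂)|²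 dt₁dt₂. Then, almost surely, M_n(φ) converges as n → ∞ to M(φ) = ∫_{[−ν_est,ν_est]^d × [−ν_est,ν_est]^d} |φ(t₁+t₂)·Φ(t₁,0)·Φ(0,t₂) − Φ(t₁,t₂)·φ(t₁)·φ(t₂)|² dt₁dt₂. In particular, in the repeated measurements model Y₁ = (X+ε⁽¹⁾, X+ε⁽²⁾) with X, ε⁽¹⁾, ε⁽²⁾ independent, M(φ) equals ∫∫ |φ(t₁+t₂)Φ_X(t₁)Φ_X(t₂) − Φ_X(t₁+t₂)φ(t₁)φ(t₂)|²·|Φ_{ε⁽¹⁾}(t₁)Φ_{ε⁽²⁾}(t₂)|² dt₁dt₂. -/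
set_option maxHeartbeats 400000
noncomputable section
open MeasureTheory Filter

/-- the box `[−ν, ν]^d` in `ℝ^d` -/
def ebox (d : ℕ) (ν : ℝ) : Set (EuclideanSpace ℝ (Fin d)) := {t | ∀ a, |t a| ≤ ν}

/-- empirical characteristic function of the first `n` observations -/
def empCF {d : ℕ} {Ω : Type*} (Y : ℕ → Ω → EuclideanSpace ℝ (Fin d) × EuclideanSpace ℝ (Fin d))
    (n : ℕ) (ω : Ω) (t₁ t₂ : EuclideanSpace ℝ (Fin d)) : ℂ :=
  (n : ℂ)⁻¹ * ∑ ℓ ∈ Finset.range n, Complex.exp (Complex.I *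
    (((∑ a, t₁ a * (Y ℓ ω).1 a) + ∑ a, t₂ a * (Y ℓ ω).2 a : ℝ) : ℂ))

/-- empirical contrast `M_n(φ)` -/
def Mn {d : ℕ} {Ω : Type*}
    (νest : ℝ) (Y : ℕ → Ω → EuclideanSpace ℝ (Fin d) × EuclideanSpace ℝ (Fin d))
    (φ : EuclideanSpace ℝ (Fin d) → ℂ) (n : ℕ) (ω : Ω) : ℝ :=
  ∫ t in ebox d νest ×ˢ ebox d νest,
    ‖(φ (t.1 + t.2) * empCF Y n ω t.1 0 * empCF Y n ω 0 t.2
      - empCF Y n ω t.1 t.2 * φ t.1 * φ t.2)‖ ^ 2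

/-- population contrast `M(φ)` built from the joint characteristic function `Φ` -/
def Mpop {d : ℕ} (νest : ℝ)
    (Φ : EuclideanSpace ℝ (Fin d) → EuclideanSpace ℝ (Fin d) → ℂ)
    (φ : EuclideanSpace ℝ (Fin d) → ℂ) : ℝ :=
  ∫ t in ebox d νest ×ˢ ebox d νest,
    ‖(φ (t.1 + t.2) * Φ t.1 0 * Φ 0 t.2 - Φ t.1 t.2 * φ t.1 * φ t.2)‖ ^ 2

/-- the kernel `exp(i(⟨t₁,y₁⟩+⟨t₂,y₂⟩))` -/
def kerS17 (d : ℕ) (s y : (EuclideanSpace ℝ (Fin d)) × (EuclideanSpace ℝ (Fin d))) : ℂ :=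
  Complex.exp (Complex.I * (((∑ a, s.1 a * y.1 a) + ∑ a, s.2 a * y.2 a : ℝ) : ℂ))

variable {d : ℕ}

lemma abs_kerS17 (s y : (EuclideanSpace ℝ (Fin d)) × (EuclideanSpace ℝ (Fin d))) :
    ‖(kerS17 d s y)‖ = 1 := by
  simp [kerS17, Complex.norm_exp]

lemma empCF_eq {Ω : Type*} (Y : ℕ → Ω → EuclideanSpace ℝ (Fin d) × EuclideanSpace ℝ (Fin d))
    (n : ℕ) (ω : Ω) (s : (EuclideanSpace ℝ (Fin d)) × (EuclideanSpace ℝ (Fin d))) :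
    empCF Y n ω s.1 s.2 = (n : ℝ)⁻¹ • ∑ ℓ ∈ Finset.range n, kerS17 d s (Y ℓ ω) := by
  simp [empCF, kerS17, Complex.real_smul]

lemma abs_empCF_le_one {Ω : Type*} (Y : ℕ → Ω → EuclideanSpace ℝ (Fin d) × EuclideanSpace ℝ (Fin d))
    (n : ℕ) (ω : Ω) (t₁ t₂ : EuclideanSpace ℝ (Fin d)) :
    ‖(empCF Y n ω t₁ t₂)‖ ≤ 1 := by
  have h := empCF_eq Y n ω (t₁, t₂)
  simp only at h
  rw [h]
  rcases Nat.eq_zero_or_pos n with hn | hn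
  · simp [hn]
  · rw [show ‖((n:ℝ)⁻¹ • ∑ ℓ ∈ Finset.range n, kerS17 d (t₁, t₂) (Y ℓ ω))‖ =
      ‖(n:ℝ)⁻¹ • ∑ ℓ ∈ Finset.range n, kerS17 d (t₁, t₂) (Y ℓ ω)‖ from rfl, norm_smul]
    calc ‖(n:ℝ)⁻¹‖ * ‖∑ ℓ ∈ Finset.range n, kerS17 d (t₁, t₂) (Y ℓ ω)‖
        ≤ (n:ℝ)⁻¹ * ∑ ℓ ∈ Finset.range n, ‖kerS17 d (t₁, t₂) (Y ℓ ω)‖ := by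
          rw [Real.norm_eq_abs, abs_of_nonneg (by positivity)]
          gcongr
          exact norm_sum_le _ _
      _ = 1 := by
          simp only [abs_kerS17]
          simp [Finset.sum_const]
          rw [inv_mul_cancel₀]
          exact_mod_cast hn.ne'

section Measurability

variable {Ω : Type*} [MeasurableSpace Ω]
  (Y : ℕ → Ω → EuclideanSpace ℝ (Fin d) × EuclideanSpace ℝ (Fin d))

lemma measurable_kerS17_comp {α : Type*} [MeasurableSpace α] (ℓ : ℕ)
    (hYm : Measurable (Y ℓ)) (g : α → Ω)
    (h : α → (EuclideanSpace ℝ (Fin d)) × (EuclideanSpace ℝ (Fin d)))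
    (hg : Measurable g) (hh : Measurable h) :
    Measurable fun x => kerS17 d (h x) (Y ℓ (g x)) := by
  apply Measurable.cexp
  apply Measurable.mul measurable_const
  apply Measurable.comp Complex.measurable_ofReal
  apply Measurable.add
  · apply Finset.measurable_sum
    intro a _
    fun_prop
  · apply Finset.measurable_sum
    intro a _
    fun_prop

end Measurability

section Helpers

variable {Ω : Type*} [MeasurableSpace Ω]
  (Y : ℕ → Ω → EuclideanSpace ℝ (Fin d) × EuclideanSpace ℝ (Fin d))

lemma measurable_empCF_comp {α : Type*} [MeasurableSpace α]
    (hYm : ∀ ℓ, Measurable (Y ℓ)) (n : ℕ) (g : α → Ω)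
    (h₁ h₂ : α → EuclideanSpace ℝ (Fin d))
    (hg : Measurable g) (hh₁ : Measurable h₁) (hh₂ : Measurable h₂) :
    Measurable fun x => empCF Y n (g x) (h₁ x) (h₂ x) := by
  unfold empCF
  apply Measurable.mul measurable_const
  apply Finset.measurable_sum
  intro ℓ _
  apply Measurable.cexp
  apply Measurable.mul measurable_const
  apply Measurable.comp Complex.measurable_ofReal
  apply Measurable.add
  · apply Finset.measurable_sum
    intro a _
    fun_prop
  · apply Finset.measurable_sum
    intro a _
    fun_prop

open ProbabilityTheory in
lemma slln_kerS17 (P : Measure Ω) [IsProbabilityMeasure P]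
    (hYm : ∀ ℓ, Measurable (Y ℓ))
    (hindep : ProbabilityTheory.iIndepFun Y P)
    (hident : ∀ ℓ, Measure.map (Y ℓ) P = Measure.map (Y 0) P)
    (s : (EuclideanSpace ℝ (Fin d)) × (EuclideanSpace ℝ (Fin d))) :
    ∀ᵐ ω ∂P, Tendsto (fun n => empCF Y n ω s.1 s.2) atTop
      (nhds (∫ ω, kerS17 d s (Y 0 ω) ∂P)) := by
  have hkm : Measurable (kerS17 d s) := by
    apply Measurable.cexp
    apply Measurable.mul measurable_const
    apply Measurable.comp Complex.measurable_ofReal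
    apply Measurable.add <;>
    · apply Finset.measurable_sum
      intro a _
      exact Measurable.mul measurable_const (by fun_prop)
  set Z : ℕ → Ω → ℂ := fun ℓ ω => kerS17 d s (Y ℓ ω) with hZ
  have hZm : ∀ ℓ, Measurable (Z ℓ) := fun ℓ => hkm.comp (hYm ℓ)
  have hint : Integrable (Z 0) P := by
    refine Integrable.mono' (integrable_const 1) (hZm 0).aestronglyMeasurable ?_
    filter_upwards with ω
    simp [Z, abs_kerS17]
  have hindepZ : Pairwise (Function.onFun (IndepFun · · P) Z) := by
    intro i j hij
    exact (hindep.indepFun hij).comp hkm hkm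
  have hidentZ : ∀ i, IdentDistrib (Z i) (Z 0) P P := by
    intro i
    have : IdentDistrib (Y i) (Y 0) P P :=
      ⟨(hYm i).aemeasurable, (hYm 0).aemeasurable, hident i⟩
    exact this.comp hkm
  filter_upwards [strong_law_ae Z hint hindepZ hidentZ] with ω hω
  have : (fun n => empCF Y n ω s.1 s.2)
      = fun n : ℕ => (n : ℝ)⁻¹ • ∑ i ∈ Finset.range n, Z i ω := by
    funext n; exact empCF_eq Y n ω s
  rw [this]
  exact hω

/-- Fubini-type swap -/
lemma ae_ae_of_forall_ae {T : Type*} [MeasurableSpace T]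
    (P : Measure Ω) [SFinite P] (μ : Measure T) [SFinite μ] (p : Ω → T → Prop)
    (hm : MeasurableSet {q : T × Ω | p q.2 q.1}) (h : ∀ t, ∀ᵐ ω ∂P, p ω t) :
    ∀ᵐ ω ∂P, ∀ᵐ t ∂μ, p ω t := by
  rw [← MeasureTheory.Measure.ae_ae_comm (μ := μ) (ν := P) hm]
  exact ae_of_all _ h

lemma ae_prod_of_ae_ae {α β : Type*} [MeasurableSpace α] [MeasurableSpace β]
    {μ : Measure α} {ν : Measure β} [SFinite μ] [SFinite ν] {q1 : α → Prop} {q2 : β → Prop}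
    (h1 : ∀ᵐ x ∂μ, q1 x) (h2 : ∀ᵐ y ∂ν, q2 y) :
    ∀ᵐ z ∂μ.prod ν, q1 z.1 ∧ q2 z.2 := by
  rw [ae_iff] at h1 h2 ⊢
  obtain ⟨A, hA_sub, hAm, hA0⟩ := exists_measurable_superset_of_null h1
  obtain ⟨B, hB_sub, hBm, hB0⟩ := exists_measurable_superset_of_null h2
  have hsub : {z : α × β | ¬(q1 z.1 ∧ q2 z.2)} ⊆ (A ×ˢ Set.univ) ∪ (Set.univ ×ˢ B) := by
    intro z hz
    rcases not_and_or.mp hz with h | h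
    · exact Or.inl ⟨hA_sub h, trivial⟩
    · exact Or.inr ⟨trivial, hB_sub h⟩
  refine le_antisymm ?_ zero_le
  calc μ.prod ν {z : α × β | ¬(q1 z.1 ∧ q2 z.2)}
      ≤ μ.prod ν ((A ×ˢ Set.univ) ∪ (Set.univ ×ˢ B)) := measure_mono hsub
    _ ≤ μ.prod ν (A ×ˢ Set.univ) + μ.prod ν (Set.univ ×ˢ B) := measure_union_le _ _
    _ = 0 := by
        rw [Measure.prod_prod, Measure.prod_prod, hA0, hB0]
        simp

lemma measurableSet_ebox (ν : ℝ) : MeasurableSet (ebox d ν) := by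
  have : ebox d ν = ⋂ a, {t : EuclideanSpace ℝ (Fin d) | |t a| ≤ ν} := by
    ext t; simp [ebox]
  rw [this]
  refine MeasurableSet.iInter fun a => ?_
  exact measurableSet_le (by fun_prop) measurable_const

lemma isCompact_ebox {ν : ℝ} (hν : 0 ≤ ν) : IsCompact (ebox d ν) := by
  have hclosed : IsClosed (ebox d ν) := by
    have : ebox d ν = ⋂ a, (fun t : EuclideanSpace ℝ (Fin d) => |t a|) ⁻¹' Set.Iic ν := by
      ext t; simp [ebox]
    rw [this]
    refine isClosed_iInter fun a => IsClosed.preimage ?_ isClosed_Iic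
    exact ((continuous_apply a).comp (PiLp.continuous_ofLp 2 _)).abs
  refine Metric.isCompact_of_isClosed_isBounded hclosed ?_
  rw [isBounded_iff_forall_norm_le]
  refine ⟨Real.sqrt (d * ν ^ 2), fun t ht => ?_⟩
  rw [EuclideanSpace.norm_eq]
  apply Real.sqrt_le_sqrt
  calc ∑ a, ‖t a‖ ^ 2 ≤ ∑ _a : Fin d, ν ^ 2 := by
        refine Finset.sum_le_sum fun a _ => ?_
        rw [Real.norm_eq_abs]
        exact pow_le_pow_left₀ (abs_nonneg _) (ht a) 2
    _ = d * ν ^ 2 := by simp [Finset.sum_const, mul_comm]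

open ProbabilityTheory in
lemma indep_integral_mul {α β : Type*} [MeasurableSpace α] [MeasurableSpace β]
    (P : Measure Ω) [IsProbabilityMeasure P] (U : Ω → α) (V : Ω → β)
    (hU : Measurable U) (hV : Measurable V) (hUV : IndepFun U V P)
    (f : α → ℂ) (g : β → ℂ) (hf : Measurable f) (hg : Measurable g) :
    ∫ ω, f (U ω) * g (V ω) ∂P = (∫ ω, f (U ω) ∂P) * ∫ ω, g (V ω) ∂P := by
  haveI : IsProbabilityMeasure (P.map U) := Measure.isProbabilityMeasure_map hU.aemeasurable
  haveI : IsProbabilityMeasure (P.map V) := Measure.isProbabilityMeasure_map hV.aemeasurable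
  have hmap : P.map (fun ω => (U ω, V ω)) = (P.map U).prod (P.map V) :=
    (indepFun_iff_map_prod_eq_prod_map_map hU.aemeasurable hV.aemeasurable).mp hUV
  have hm2 : AEStronglyMeasurable (fun p : α × β => f p.1 * g p.2)
      (P.map (fun ω => (U ω, V ω))) :=
    (((hf.comp measurable_fst).mul (hg.comp measurable_snd)) :
      Measurable fun p : α × β => f p.1 * g p.2).aestronglyMeasurable
  have h1 : ∫ ω, f (U ω) * g (V ω) ∂P
      = ∫ p : α × β, f p.1 * g p.2 ∂(P.map (fun ω => (U ω, V ω))) := by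
    rw [integral_map (hU.prodMk hV).aemeasurable hm2]
  rw [h1, hmap, integral_prod_mul, integral_map hU.aemeasurable hf.aestronglyMeasurable,
    integral_map hV.aemeasurable hg.aestronglyMeasurable]

lemma abs_contrast_le {B : ℝ} (hB : 0 ≤ B) {x y z u v w : ℂ}
    (hx : ‖x‖ ≤ B) (hy : ‖y‖ ≤ B) (hz : ‖z‖ ≤ B)
    (hu : ‖u‖ ≤ 1) (hv : ‖v‖ ≤ 1) (hw : ‖w‖ ≤ 1) :
    (‖(x * u * v - w * y * z)‖) ^ 2 ≤ (B + B * B) ^ 2 := by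
  have h : ‖(x * u * v - w * y * z)‖ ≤ B + B * B := by
    calc ‖(x * u * v - w * y * z)‖
        ≤ ‖(x * u * v)‖ + ‖(w * y * z)‖ :=
          norm_sub_le _ _
      _ = ‖x‖ * ‖u‖ * ‖v‖
          + ‖w‖ * ‖y‖ * ‖z‖ := by
          rw [norm_mul, norm_mul, norm_mul, norm_mul]
      _ ≤ B * 1 * 1 + (1 * B) * B := by
          refine add_le_add ?_ ?_
          · exact mul_le_mul (mul_le_mul hx hu (norm_nonneg _) hB) hv
              (norm_nonneg _) (by positivity)
          · exact mul_le_mul (mul_le_mul hw hy (norm_nonneg _) zero_le_one) hz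
              (norm_nonneg _) (by positivity)
      _ = B + B * B := by ring
  calc (‖(x * u * v - w * y * z)‖) ^ 2 ≤ (B + B * B) ^ 2 :=
    pow_le_pow_left₀ (norm_nonneg _) h 2

end Helpers


section SpecMeas
variable {Ω : Type*} [MeasurableSpace Ω]
  {Y : ℕ → Ω → EuclideanSpace ℝ (Fin d) × EuclideanSpace ℝ (Fin d)}
  (hYm : ∀ ℓ, Measurable (Y ℓ))
include hYm

lemma measurable_empCF_a (n : ℕ) :
    Measurable fun q : ((EuclideanSpace ℝ (Fin d)) × (EuclideanSpace ℝ (Fin d))) × Ω => empCF Y n q.2 q.1.1 q.1.2 := by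
  unfold empCF
  apply Measurable.mul measurable_const
  apply Finset.measurable_sum
  intro ℓ _
  apply Measurable.cexp
  apply Measurable.mul measurable_const
  apply Measurable.comp Complex.measurable_ofReal
  apply Measurable.add
  · apply Finset.measurable_sum
    intro a _
    fun_prop
  · apply Finset.measurable_sum
    intro a _
    fun_prop

lemma measurable_empCF_b (n : ℕ) :
    Measurable fun q : (EuclideanSpace ℝ (Fin d)) × Ω => empCF Y n q.2 q.1 0 := by
  unfold empCF
  apply Measurable.mul measurable_const
  apply Finset.measurable_sum
  intro ℓ _
  apply Measurable.cexp
  apply Measurable.mul measurable_const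
  apply Measurable.comp Complex.measurable_ofReal
  apply Measurable.add
  · apply Finset.measurable_sum
    intro a _
    fun_prop
  · apply Finset.measurable_sum
    intro a _
    fun_prop

lemma measurable_empCF_c (n : ℕ) :
    Measurable fun q : (EuclideanSpace ℝ (Fin d)) × Ω => empCF Y n q.2 0 q.1 := by
  unfold empCF
  apply Measurable.mul measurable_const
  apply Finset.measurable_sum
  intro ℓ _
  apply Measurable.cexp
  apply Measurable.mul measurable_const
  apply Measurable.comp Complex.measurable_ofReal
  apply Measurable.add
  · apply Finset.measurable_sum
    intro a _
    fun_prop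
  · apply Finset.measurable_sum
    intro a _
    fun_prop

lemma measurable_empCF_d (n : ℕ) (ω : Ω) :
    Measurable fun q : (EuclideanSpace ℝ (Fin d)) × (EuclideanSpace ℝ (Fin d)) => empCF Y n ω q.1 0 := by
  unfold empCF
  apply Measurable.mul measurable_const
  apply Finset.measurable_sum
  intro ℓ _
  apply Measurable.cexp
  apply Measurable.mul measurable_const
  apply Measurable.comp Complex.measurable_ofReal
  apply Measurable.add
  · apply Finset.measurable_sum
    intro a _
    fun_prop
  · apply Finset.measurable_sum
    intro a _
    fun_prop

lemma measurable_empCF_e (n : ℕ) (ω : Ω) :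
    Measurable fun q : (EuclideanSpace ℝ (Fin d)) × (EuclideanSpace ℝ (Fin d)) => empCF Y n ω 0 q.2 := by
  unfold empCF
  apply Measurable.mul measurable_const
  apply Finset.measurable_sum
  intro ℓ _
  apply Measurable.cexp
  apply Measurable.mul measurable_const
  apply Measurable.comp Complex.measurable_ofReal
  apply Measurable.add
  · apply Finset.measurable_sum
    intro a _
    fun_prop
  · apply Finset.measurable_sum
    intro a _
    fun_prop

lemma measurable_empCF_f (n : ℕ) (ω : Ω) :
    Measurable fun q : (EuclideanSpace ℝ (Fin d)) × (EuclideanSpace ℝ (Fin d)) => empCF Y n ω q.1 q.2 := by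
  unfold empCF
  apply Measurable.mul measurable_const
  apply Finset.measurable_sum
  intro ℓ _
  apply Measurable.cexp
  apply Measurable.mul measurable_const
  apply Measurable.comp Complex.measurable_ofReal
  apply Measurable.add
  · apply Finset.measurable_sum
    intro a _
    fun_prop
  · apply Finset.measurable_sum
    intro a _
    fun_prop

end SpecMeas


lemma abs_factor (p q r x y z e1 e2 : ℂ) :
    (‖(p * (x * e1) * (y * e2) - (z * (e1 * e2)) * q * r)‖) ^ 2
    = (‖(p * x * y - z * q * r)‖) ^ 2 * (‖(e1 * e2)‖) ^ 2 := by
  rw [show p * (x * e1) * (y * e2) - (z * (e1 * e2)) * q * r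
    = (p * x * y - z * q * r) * (e1 * e2) by ring, norm_mul, mul_pow]

/-- a.s. convergence of the empirical contrast `M_n(φ)` to the population
contrast `M(φ)`, and the expression of `M(φ)` in the repeated measurements model. -/
theorem statement17 (d : ℕ) (hd : 1 ≤ d) (νest : ℝ) (hν : 0 < νest)
    {Ω : Type*} [MeasurableSpace Ω] (P : Measure Ω) [IsProbabilityMeasure P]
    (Y : ℕ → Ω → EuclideanSpace ℝ (Fin d) × EuclideanSpace ℝ (Fin d))
    (hYm : ∀ ℓ, Measurable (Y ℓ))
    (hindep : ProbabilityTheory.iIndepFun Y P)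
    (hident : ∀ ℓ, Measure.map (Y ℓ) P = Measure.map (Y 0) P)
    (Φ : EuclideanSpace ℝ (Fin d) → EuclideanSpace ℝ (Fin d) → ℂ)
    (hΦ : Φ = fun t₁ t₂ => ∫ ω, Complex.exp (Complex.I *
      (((∑ a, t₁ a * (Y 0 ω).1 a) + ∑ a, t₂ a * (Y 0 ω).2 a : ℝ) : ℂ)) ∂P)
    (φ : EuclideanSpace ℝ (Fin d) → ℂ) (hφm : Measurable φ)
    (hφb : ∃ B : ℝ, ∀ t : EuclideanSpace ℝ (Fin d), (∀ a, |t a| ≤ 2 * νest) →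
      ‖φ t‖ ≤ B) :
    (∀ᵐ ω ∂P, Tendsto (fun n => Mn νest Y φ n ω) atTop (nhds (Mpop νest Φ φ))) ∧
    (∀ X ε₁ ε₂ : Ω → EuclideanSpace ℝ (Fin d),
      Measurable X → Measurable ε₁ → Measurable ε₂ →
      ProbabilityTheory.iIndepFun ![X, ε₁, ε₂] P →
      (∀ ω, Y 0 ω = (X ω + ε₁ ω, X ω + ε₂ ω)) →
      Mpop νest Φ φ =
        ∫ t in ebox d νest ×ˢ ebox d νest,
          ‖(φ (t.1 + t.2) *
                (∫ ω, Complex.exp (Complex.I * ((∑ a, t.1 a * X ω a : ℝ) : ℂ)) ∂P) *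
                (∫ ω, Complex.exp (Complex.I * ((∑ a, t.2 a * X ω a : ℝ) : ℂ)) ∂P) -
              (∫ ω, Complex.exp (Complex.I * ((∑ a, (t.1 + t.2) a * X ω a : ℝ) : ℂ)) ∂P) *
                φ t.1 * φ t.2)‖ ^ 2 *
          ‖((∫ ω, Complex.exp (Complex.I * ((∑ a, t.1 a * ε₁ ω a : ℝ) : ℂ)) ∂P) *
              (∫ ω, Complex.exp (Complex.I * ((∑ a, t.2 a * ε₂ ω a : ℝ) : ℂ)) ∂P))‖ ^ 2) := by
  classical
  obtain ⟨B₀, hB₀⟩ := hφb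
  have hBnn : (0 : ℝ) ≤ max B₀ 0 := le_max_right _ _
  have hφB : ∀ t : EuclideanSpace ℝ (Fin d), (∀ a, |t a| ≤ 2 * νest) →
      ‖(φ t)‖ ≤ max B₀ 0 := fun t ht => (hB₀ t ht).trans (le_max_left _ _)
  have hΦker : ∀ s : (EuclideanSpace ℝ (Fin d)) × (EuclideanSpace ℝ (Fin d)),
      Φ s.1 s.2 = ∫ ω, kerS17 d s (Y 0 ω) ∂P := fun s => by rw [hΦ]; rfl
  constructor
  · -- Part 1: almost sure convergence
    have hboxm : MeasurableSet (ebox d νest ×ˢ ebox d νest) :=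
      (measurableSet_ebox _).prod (measurableSet_ebox _)
    haveI : IsFiniteMeasure (volume.restrict (ebox d νest ×ˢ ebox d νest)) := ⟨by
      rw [Measure.restrict_apply_univ]
      exact ((isCompact_ebox hν.le).prod (isCompact_ebox hν.le)).measure_lt_top⟩
    have hGsm : StronglyMeasurable fun s : (EuclideanSpace ℝ (Fin d)) ×
        (EuclideanSpace ℝ (Fin d)) => Φ s.1 s.2 := by
      have h : StronglyMeasurable fun q : ((EuclideanSpace ℝ (Fin d)) ×
          (EuclideanSpace ℝ (Fin d))) × Ω => kerS17 d q.1 (Y 0 q.2) :=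
        (measurable_kerS17_comp Y 0 (hYm 0) Prod.snd Prod.fst measurable_snd
          measurable_fst).stronglyMeasurable
      have h2 := h.integral_prod_right' (ν := P)
      have heq : (fun s : (EuclideanSpace ℝ (Fin d)) × (EuclideanSpace ℝ (Fin d)) =>
          Φ s.1 s.2) = fun s => ∫ ω, kerS17 d s (Y 0 ω) ∂P := by
        funext s; exact hΦker s
      rw [heq]; exact h2
    have hGm := hGsm.measurable
    have h3 : ∀ᵐ ω ∂P, ∀ᵐ s ∂(volume.restrict (ebox d νest ×ˢ ebox d νest)),
        Tendsto (fun n => empCF Y n ω s.1 s.2) atTop (nhds (Φ s.1 s.2)) := by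
      refine ae_ae_of_forall_ae P _ _ ?_ ?_
      · refine measurableSet_tendsto_fun (fun n => ?_) ?_
        · exact measurable_empCF_a hYm n
        · exact hGm.comp measurable_fst
      · intro s
        have := slln_kerS17 Y P hYm hindep hident s
        rw [← hΦker s] at this
        exact this
    have h1 : ∀ᵐ ω ∂P, ∀ᵐ t ∂(volume.restrict (ebox d νest)),
        Tendsto (fun n => empCF Y n ω t 0) atTop (nhds (Φ t 0)) := by
      refine ae_ae_of_forall_ae P _ _ ?_ ?_
      · refine measurableSet_tendsto_fun (fun n => ?_) ?_
        · exact measurable_empCF_b hYm n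
        · exact hGm.comp (measurable_fst.prodMk measurable_const)
      · intro t
        have := slln_kerS17 Y P hYm hindep hident (t, 0)
        rw [← hΦker (t, 0)] at this
        exact this
    have h2 : ∀ᵐ ω ∂P, ∀ᵐ t ∂(volume.restrict (ebox d νest)),
        Tendsto (fun n => empCF Y n ω 0 t) atTop (nhds (Φ 0 t)) := by
      refine ae_ae_of_forall_ae P _ _ ?_ ?_
      · refine measurableSet_tendsto_fun (fun n => ?_) ?_
        · exact measurable_empCF_c hYm n
        · exact hGm.comp (measurable_const.prodMk measurable_fst)
      · intro t
        have := slln_kerS17 Y P hYm hindep hident (0, t)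
        rw [← hΦker (0, t)] at this
        exact this
    filter_upwards [h1, h2, h3] with ω hω1 hω2 hω3
    have hμ2eq : volume.restrict (ebox d νest ×ˢ ebox d νest)
        = (volume.restrict (ebox d νest)).prod (volume.restrict (ebox d νest)) := by
      rw [Measure.prod_restrict, ← Measure.volume_eq_prod]
    have hae12 : ∀ᵐ s ∂(volume.restrict (ebox d νest ×ˢ ebox d νest)),
        Tendsto (fun n => empCF Y n ω s.1 0) atTop (nhds (Φ s.1 0)) ∧
        Tendsto (fun n => empCF Y n ω 0 s.2) atTop (nhds (Φ 0 s.2)) := by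
      rw [hμ2eq]; exact ae_prod_of_ae_ae hω1 hω2
    have hmem : ∀ᵐ s ∂(volume.restrict (ebox d νest ×ˢ ebox d νest)),
        s ∈ ebox d νest ×ˢ ebox d νest := ae_restrict_mem hboxm
    refine tendsto_integral_of_dominated_convergence
      (F := fun n (s : (EuclideanSpace ℝ (Fin d)) × (EuclideanSpace ℝ (Fin d))) =>
        (‖(φ (s.1 + s.2) * empCF Y n ω s.1 0 * empCF Y n ω 0 s.2
          - empCF Y n ω s.1 s.2 * φ s.1 * φ s.2)‖ : ℝ) ^ 2)
      (f := fun s => (‖(φ (s.1 + s.2) * Φ s.1 0 * Φ 0 s.2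
          - Φ s.1 s.2 * φ s.1 * φ s.2)‖ : ℝ) ^ 2)
      (bound := fun _ => (max B₀ 0 + max B₀ 0 * max B₀ 0) ^ 2) ?_ ?_ ?_ ?_
    · intro n
      have m0 : Measurable fun s : (EuclideanSpace ℝ (Fin d)) ×
          (EuclideanSpace ℝ (Fin d)) => φ (s.1 + s.2) :=
        hφm.comp (measurable_fst.add measurable_snd)
      have m1 := measurable_empCF_d (Y := Y) hYm n ω
      have m2 := measurable_empCF_e (Y := Y) hYm n ω
      have m3 := measurable_empCF_f (Y := Y) hYm n ω
      exact (((continuous_norm.measurable.comp (((m0.mul m1).mul m2).sub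
        ((m3.mul (hφm.comp measurable_fst)).mul (hφm.comp measurable_snd))))).pow_const
        2).aestronglyMeasurable
    · exact integrable_const _
    · intro n
      filter_upwards [hmem] with s hs
      rw [Real.norm_eq_abs, abs_of_nonneg (by positivity)]
      refine abs_contrast_le hBnn ?_ ?_ ?_ (abs_empCF_le_one Y n ω s.1 0)
        (abs_empCF_le_one Y n ω 0 s.2) (abs_empCF_le_one Y n ω s.1 s.2)
      · refine hφB _ fun a => ?_
        have h1a := hs.1 a
        have h2a := hs.2 a
        calc |(s.1 + s.2) a| = |s.1 a + s.2 a| := by rw [PiLp.add_apply]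
          _ ≤ |s.1 a| + |s.2 a| := abs_add_le _ _
          _ ≤ 2 * νest := by linarith
      · exact hφB _ fun a => (hs.1 a).trans (by linarith)
      · exact hφB _ fun a => (hs.2 a).trans (by linarith)
    · filter_upwards [hae12, hω3] with s h12 h3s
      have hT : Tendsto (fun n => φ (s.1 + s.2) * empCF Y n ω s.1 0 * empCF Y n ω 0 s.2
          - empCF Y n ω s.1 s.2 * φ s.1 * φ s.2) atTop
          (nhds (φ (s.1 + s.2) * Φ s.1 0 * Φ 0 s.2 - Φ s.1 s.2 * φ s.1 * φ s.2)) :=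
        ((tendsto_const_nhds.mul h12.1).mul h12.2).sub
          ((h3s.mul tendsto_const_nhds).mul tendsto_const_nhds)
      exact hT.norm.pow 2
  · -- Part 2
    intro X ε₁ ε₂ hXm hε₁m hε₂m hind3 hY0
    have hmv : ∀ i, Measurable (![X, ε₁, ε₂] i) := by
      intro i; fin_cases i <;> simpa
    have hI1 : ProbabilityTheory.IndepFun X (fun ω => (ε₁ ω, ε₂ ω)) P := by
      have := (hind3.indepFun_prodMk hmv 1 2 0 (by decide) (by decide)).symm
      simpa using this
    have hI2 : ProbabilityTheory.IndepFun ε₁ ε₂ P := by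
      have := hind3.indepFun (show (1 : Fin 3) ≠ 2 by decide)
      simpa using this
    have hexpm : ∀ u : EuclideanSpace ℝ (Fin d), Measurable fun x : EuclideanSpace ℝ (Fin d) =>
        Complex.exp (Complex.I * ((∑ a, u a * x a : ℝ) : ℂ)) := by
      intro u
      apply Measurable.cexp
      apply Measurable.mul measurable_const
      apply Measurable.comp Complex.measurable_ofReal
      apply Finset.measurable_sum
      intro a _
      fun_prop
    have keyX : ∀ t₁ t₂ : EuclideanSpace ℝ (Fin d), Φ t₁ t₂ =
        (∫ ω, Complex.exp (Complex.I * ((∑ a, (t₁ + t₂) a * X ω a : ℝ) : ℂ)) ∂P) *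
        ((∫ ω, Complex.exp (Complex.I * ((∑ a, t₁ a * ε₁ ω a : ℝ) : ℂ)) ∂P) *
         (∫ ω, Complex.exp (Complex.I * ((∑ a, t₂ a * ε₂ ω a : ℝ) : ℂ)) ∂P)) := by
      intro t₁ t₂
      set f : EuclideanSpace ℝ (Fin d) → ℂ :=
        fun x => Complex.exp (Complex.I * ((∑ a, (t₁ + t₂) a * x a : ℝ) : ℂ)) with hf
      set f₁ : EuclideanSpace ℝ (Fin d) → ℂ :=
        fun x => Complex.exp (Complex.I * ((∑ a, t₁ a * x a : ℝ) : ℂ)) with hf₁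
      set f₂ : EuclideanSpace ℝ (Fin d) → ℂ :=
        fun x => Complex.exp (Complex.I * ((∑ a, t₂ a * x a : ℝ) : ℂ)) with hf₂
      have hgm : Measurable fun p : (EuclideanSpace ℝ (Fin d)) ×
          (EuclideanSpace ℝ (Fin d)) => f₁ p.1 * f₂ p.2 :=
        ((hexpm t₁).comp measurable_fst).mul ((hexpm t₂).comp measurable_snd)
      have hstep1 : Φ t₁ t₂ = ∫ ω, f (X ω) *
          (fun p : (EuclideanSpace ℝ (Fin d)) × (EuclideanSpace ℝ (Fin d)) =>
            f₁ p.1 * f₂ p.2) (ε₁ ω, ε₂ ω) ∂P := by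
        rw [hΦ]
        refine integral_congr_ae (Filter.Eventually.of_forall fun ω => ?_)
        show Complex.exp (Complex.I *
            (((∑ a, t₁ a * (Y 0 ω).1 a) + ∑ a, t₂ a * (Y 0 ω).2 a : ℝ) : ℂ))
          = Complex.exp (Complex.I * ((∑ a, (t₁ + t₂) a * X ω a : ℝ) : ℂ)) *
            (Complex.exp (Complex.I * ((∑ a, t₁ a * ε₁ ω a : ℝ) : ℂ)) *
             Complex.exp (Complex.I * ((∑ a, t₂ a * ε₂ ω a : ℝ) : ℂ)))
        rw [hY0 ω]
        rw [← Complex.exp_add, ← Complex.exp_add]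
        congr 1
        have hr : ((∑ a, t₁ a * (X ω + ε₁ ω) a) + ∑ a, t₂ a * (X ω + ε₂ ω) a : ℝ)
            = (∑ a, (t₁ + t₂) a * X ω a) + ((∑ a, t₁ a * ε₁ ω a) + ∑ a, t₂ a * ε₂ ω a) := by
          simp only [PiLp.add_apply]
          simp only [mul_add, add_mul, Finset.sum_add_distrib]
          ring
        rw [hr]
        push_cast
        ring
      calc Φ t₁ t₂ = ∫ ω, f (X ω) *
            (fun p : (EuclideanSpace ℝ (Fin d)) × (EuclideanSpace ℝ (Fin d)) =>
              f₁ p.1 * f₂ p.2) (ε₁ ω, ε₂ ω) ∂P := hstep1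
        _ = (∫ ω, f (X ω) ∂P) * ∫ ω, (fun p : (EuclideanSpace ℝ (Fin d)) ×
              (EuclideanSpace ℝ (Fin d)) => f₁ p.1 * f₂ p.2) (ε₁ ω, ε₂ ω) ∂P :=
            indep_integral_mul P X (fun ω => (ε₁ ω, ε₂ ω)) hXm (hε₁m.prodMk hε₂m) hI1
              f _ (hexpm _) hgm
        _ = (∫ ω, f (X ω) ∂P) * ((∫ ω, f₁ (ε₁ ω) ∂P) * ∫ ω, f₂ (ε₂ ω) ∂P) := by
            rw [show (∫ ω, (fun p : (EuclideanSpace ℝ (Fin d)) ×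
              (EuclideanSpace ℝ (Fin d)) => f₁ p.1 * f₂ p.2) (ε₁ ω, ε₂ ω) ∂P)
              = ∫ ω, f₁ (ε₁ ω) * f₂ (ε₂ ω) ∂P from rfl]
            rw [indep_integral_mul P ε₁ ε₂ hε₁m hε₂m hI2 f₁ f₂ (hexpm _) (hexpm _)]
    have hone : ∀ (W : Ω → EuclideanSpace ℝ (Fin d)),
        (∫ ω, Complex.exp (Complex.I * ((∑ a, (0 : EuclideanSpace ℝ (Fin d)) a * W ω a : ℝ) : ℂ)) ∂P) = 1 := by
      intro W
      have h0 : ∀ ω, ((∑ a, (0 : EuclideanSpace ℝ (Fin d)) a * W ω a : ℝ) : ℂ) = 0 := by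
        intro ω
        norm_cast
        refine Finset.sum_eq_zero fun a _ => ?_
        simp
      simp only [h0, mul_zero, Complex.exp_zero]
      simp
    have key10 : ∀ t : EuclideanSpace ℝ (Fin d), Φ t 0 =
        (∫ ω, Complex.exp (Complex.I * ((∑ a, t a * X ω a : ℝ) : ℂ)) ∂P) *
        (∫ ω, Complex.exp (Complex.I * ((∑ a, t a * ε₁ ω a : ℝ) : ℂ)) ∂P) := by
      intro t
      have := keyX t 0
      rw [add_zero] at this
      rw [this, hone ε₂]
      ring
    have key01 : ∀ t : EuclideanSpace ℝ (Fin d), Φ 0 t =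
        (∫ ω, Complex.exp (Complex.I * ((∑ a, t a * X ω a : ℝ) : ℂ)) ∂P) *
        (∫ ω, Complex.exp (Complex.I * ((∑ a, t a * ε₂ ω a : ℝ) : ℂ)) ∂P) := by
      intro t
      have := keyX 0 t
      rw [zero_add] at this
      rw [this, hone ε₁]
      ring
    show (∫ t in ebox d νest ×ˢ ebox d νest,
        ‖(φ (t.1 + t.2) * Φ t.1 0 * Φ 0 t.2 - Φ t.1 t.2 * φ t.1 * φ t.2)‖ ^ 2) = _
    refine integral_congr_ae (Filter.Eventually.of_forall fun s => ?_)
    show ‖(φ (s.1 + s.2) * Φ s.1 0 * Φ 0 s.2 - Φ s.1 s.2 * φ s.1 * φ s.2)‖ ^ 2 = _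
    rw [keyX s.1 s.2, key10 s.1, key01 s.2]
    exact abs_factor _ _ _ _ _ _ _ _
end
end
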